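/- On the elliptic curve E : y^2 + 5890802·xy + 2706191958366648675·y = x^3 + 3739409500365·x^2 over Q, the point (0,0) has order exactly 5, and each of x = -21207376737 and x = 37660080920 is the x-coordinate of a rational point on E. -/

import Mathlib

def E : WeierstrassCurve.Affine ℚ :=
  ⟨5890802, 3739409500365, 2706191958366648675, 0, 0⟩

open WeierstrassCurve.Affine WeierstrassCurve.Affine.Point

lemma Ens (x y : ℚ)
    (h1 : y ^ 2 + 5890802 * x * y + 2706191958366648675 * y
        = x ^ 3 + 3739409500365 * x ^ 2 + 0 * x + 0)
    (h2 : y ≠ -y - 5890802 * x - 2706191958366648675) :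
    E.Nonsingular x y := by
  rw [WeierstrassCurve.Affine.nonsingular_iff, WeierstrassCurve.Affine.equation_iff]
  exact ⟨h1, Or.inr h2⟩

lemma some_congr {x₁ y₁ x₂ y₂ : ℚ} (h₁ : E.Nonsingular x₁ y₁) (h₂ : E.Nonsingular x₂ y₂)
    (hx : x₁ = x₂) (hy : y₁ = y₂) : Point.some _ _ h₁ = Point.some _ _ h₂ := by
  subst hx; subst hy; rfl

/-- On `E`, the point `(0,0)` has order exactly 5, and `x = -21207376737` and
`x = 37660080920` are `x`-coordinates of rational points on `E`. -/
theorem order_five_and_points :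
    (∃ h : E.Nonsingular 0 0, addOrderOf (WeierstrassCurve.Affine.Point.some _ _ h) = 5) ∧
    (∃ y : ℚ, E.Nonsingular (-21207376737) y) ∧
    (∃ y : ℚ, E.Nonsingular 37660080920 y) := by
  have hP : E.Nonsingular 0 0 := Ens 0 0 (by norm_num) (by norm_num)
  have h2 : E.Nonsingular (-3739409500365) 19321929005202494055 :=
    Ens _ _ (by norm_num) (by norm_num)
  have h4 : E.Nonsingular 0 (-2706191958366648675) :=
    Ens _ _ (by norm_num) (by norm_num)
  have hy0 : (0 : ℚ) ≠ E.negY 0 0 := by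
    simp only [negY]; show (0:ℚ) ≠ -0 - 5890802 * 0 - 2706191958366648675; norm_num [E]
  have hy2 : (19321929005202494055 : ℚ) ≠ E.negY (-3739409500365) 19321929005202494055 := by
    simp only [negY]
    show (19321929005202494055 : ℚ) ≠
      -19321929005202494055 - 5890802 * (-3739409500365) - 2706191958366648675
    norm_num [E]
  have slope0 : E.slope 0 0 0 0 = 0 := by
    rw [slope_of_Y_ne rfl hy0]
    simp only [negY]
    show ((3 * 0 ^ 2 + 2 * 3739409500365 * 0 + 0 - 5890802 * 0) /
      (0 - (-0 - 5890802 * 0 - 2706191958366648675)) : ℚ) = 0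
    norm_num [E]
  have slope2 : E.slope (-3739409500365) (-3739409500365)
      19321929005202494055 19321929005202494055 = -5167107 := by
    rw [slope_of_Y_ne rfl hy2]
    simp only [negY]
    show ((3 * (-3739409500365) ^ 2 + 2 * 3739409500365 * (-3739409500365) + 0
        - 5890802 * 19321929005202494055) /
      (19321929005202494055 - (-19321929005202494055 - 5890802 * (-3739409500365)
        - 2706191958366648675)) : ℚ) = -5167107
    norm_num [E]
  have e2 : Point.some _ _ hP + Point.some _ _ hP = Point.some _ _ h2 := by
    rw [add_self_of_Y_ne hy0]
    refine some_congr _ _ ?_ ?_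
    · rw [slope0]; simp only [addX]
      show ((0:ℚ) ^ 2 + 5890802 * 0 - 3739409500365 - 0 - 0 : ℚ) = -3739409500365
      norm_num [E]
    · rw [slope0]; simp only [addY, negAddY, addX, negY]
      norm_num [E]
  have e4 : Point.some _ _ h2 + Point.some _ _ h2 = Point.some _ _ h4 := by
    rw [add_self_of_Y_ne hy2]
    refine some_congr _ _ ?_ ?_
    · rw [slope2]; simp only [addX]
      show ((-5167107 : ℚ) ^ 2 + 5890802 * (-5167107) - 3739409500365
        - (-3739409500365) - (-3739409500365) : ℚ) = 0
      norm_num [E]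
    · rw [slope2]; simp only [addY, negAddY, addX, negY]
      norm_num [E]
  have e5 : Point.some _ _ h4 + Point.some _ _ hP = 0 := by
    refine add_of_Y_eq rfl ?_
    simp only [negY]
    show (-2706191958366648675 : ℚ) = -0 - 5890802 * 0 - 2706191958366648675
    norm_num [E]
  have h5 : (5 : ℕ) • Point.some _ _ hP = 0 := by
    have : (5 : ℕ) • Point.some _ _ hP =
        ((Point.some _ _ hP + Point.some _ _ hP) + (Point.some _ _ hP + Point.some _ _ hP)) + Point.some _ _ hP := by
      rw [show (5:ℕ) = 4 + 1 from rfl, add_nsmul, one_nsmul,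
        show (4:ℕ) = 2 + 2 from rfl, add_nsmul, two_nsmul]
    rw [this, e2, e4, e5]
  haveI : Fact (Nat.Prime 5) := ⟨by norm_num⟩
  refine ⟨⟨hP, ?_⟩, ⟨647687622929436, Ens _ _ (by norm_num) (by norm_num)⟩,
    ⟨1828392221155885, Ens _ _ (by norm_num) (by norm_num)⟩⟩
  exact addOrderOf_eq_prime h5 (by exact fun h => nomatch h.trans zero_def)
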